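/- Let K(m) = ∫_0^{π/2} (1 − m sin²θ)^{−1/2} dθ for m < 1 denote the complete elliptic integral of the first kind. Then lim_{m → 1⁻} K(m) / (−(1/2) log(1 − m)) = 1; that is, K(m) is asymptotically equivalent to −(1/2) log(1 − m) as m tends to 1 from the left. -/

import Mathlib

open MeasureTheory Filter Real

lemma arsinh_log_eq (x : ℝ) : Real.arsinh x = Real.log (x + √(1 + x ^ 2)) := by
  rw [← Real.exp_arsinh, Real.log_exp]

lemma log_le_arsinh {x : ℝ} (hx : 0 < x) : Real.log x ≤ Real.arsinh x := by
  rw [arsinh_log_eq]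
  exact Real.log_le_log hx (by nlinarith [Real.sqrt_nonneg (1 + x ^ 2)])

lemma arsinh_le_log {x : ℝ} (hx : 1 ≤ x) : Real.arsinh x ≤ Real.log (3 * x) := by
  rw [arsinh_log_eq]
  have h2 : √(1 + x ^ 2) ≤ 2 * x := by
    rw [show (2:ℝ) * x = √((2*x)^2) by rw [Real.sqrt_sq (by linarith)]]
    exact Real.sqrt_le_sqrt (by nlinarith)
  exact Real.log_le_log (by nlinarith [Real.sqrt_nonneg (1 + x ^ 2)]) (by nlinarith)

lemma rpow_neg_half {x : ℝ} (hx : 0 < x) : x ^ (-(1:ℝ)/2) = (√x)⁻¹ := by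
  rw [neg_div, Real.rpow_neg hx.le, Real.sqrt_eq_rpow]

lemma base_pos {m : ℝ} (hm : m < 1) (θ : ℝ) : 0 < 1 - m * Real.sin θ ^ 2 := by
  have h1 : Real.sin θ ^ 2 ≤ 1 := Real.sin_sq_le_one θ
  have h2 : 0 ≤ Real.sin θ ^ 2 := sq_nonneg _
  rcases le_or_gt m 0 with h | h
  · nlinarith
  · nlinarith

lemma base_eq (m θ : ℝ) : 1 - m * Real.sin θ ^ 2 = (1 - m) + m * Real.cos θ ^ 2 := by
  have h := Real.sin_sq_add_cos_sq θ
  linear_combination (-m) * h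

lemma contK {m : ℝ} (hm : m < 1) :
    Continuous (fun θ : ℝ => (1 - m * Real.sin θ ^ 2) ^ (-(1:ℝ)/2)) := by
  apply Continuous.rpow_const
  · exact continuous_const.sub (continuous_const.mul (Real.continuous_sin.pow 2))
  · exact fun θ => Or.inl (base_pos hm θ).ne'

lemma inv_sqrt_le {x y : ℝ} (hx : 0 < x) (hxy : x ≤ y) : (√y)⁻¹ ≤ (√x)⁻¹ :=
  inv_anti₀ (Real.sqrt_pos.2 hx) (Real.sqrt_le_sqrt hxy)

lemma cont_inv_sqrt (s b c : ℝ) (hs : 0 < s) :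
    Continuous (fun θ : ℝ => (√(s^2 + b^2*(c-θ)^2))⁻¹) := by
  apply Continuous.inv₀
  · exact (continuous_const.add ((continuous_const.mul
      (((continuous_const.sub continuous_id).pow 2))))).sqrt
  · intro θ
    refine (Real.sqrt_pos.2 ?_).ne'
    nlinarith [sq_nonneg (b*(c-θ)), sq_nonneg (c-θ), sq_nonneg b]

lemma integral_inv_sqrt (s b c a₁ a₂ : ℝ) (hs : 0 < s) (hb : 0 < b) :
    ∫ θ in a₁..a₂, (√(s^2 + b^2*(c-θ)^2))⁻¹
      = (1/b) * (Real.arsinh (b*(c-a₁)/s) - Real.arsinh (b*(c-a₂)/s)) := by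
  have key : ∀ θ : ℝ, HasDerivAt (fun θ : ℝ => -(1/b) * Real.arsinh (b*(c-θ)/s))
      ((√(s^2 + b^2*(c-θ)^2))⁻¹) θ := by
    intro θ
    have hg : HasDerivAt (fun θ : ℝ => b*(c-θ)/s) (-b/s) θ := by
      have : HasDerivAt (fun θ : ℝ => b*(c-θ)) (-b) θ := by
        simpa using (((hasDerivAt_id θ).const_sub c).const_mul b)
      simpa [neg_div] using this.div_const s
    have h1 := ((Real.hasDerivAt_arsinh (b*(c-θ)/s)).comp θ hg).const_mul (-(1/b))
    refine h1.congr_deriv (Eq.symm ?_)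
    have hX : (0:ℝ) < 1 + (b*(c-θ)/s)^2 := by positivity
    have hfac : s^2 + b^2*(c-θ)^2 = s^2 * (1 + (b*(c-θ)/s)^2) := by
      field_simp
    rw [hfac, Real.sqrt_mul (sq_nonneg s), Real.sqrt_sq hs.le]
    have hXne : √(1 + (b*(c-θ)/s)^2) ≠ 0 := (Real.sqrt_pos.2 hX).ne'
    field_simp
  rw [intervalIntegral.integral_eq_sub_of_hasDerivAt (fun θ _ => key θ)
    ((cont_inv_sqrt s b c hs).intervalIntegrable a₁ a₂)]
  ring

lemma K_lower {m : ℝ} (hm : m < 1) :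
    Real.arsinh ((Real.pi/2) / √(1-m)) ≤
      ∫ θ in (0:ℝ)..(Real.pi/2), (1 - m * Real.sin θ ^ 2) ^ (-(1:ℝ)/2) := by
  have hs : (0:ℝ) < √(1-m) := Real.sqrt_pos.2 (by linarith)
  have hs2 : (√(1-m))^2 = 1 - m := Real.sq_sqrt (by linarith)
  set s := √(1-m) with hsdef
  have hval := integral_inv_sqrt s 1 (Real.pi/2) 0 (Real.pi/2) hs one_pos
  simp only [one_mul, sub_self, zero_div, Real.arsinh_zero, sub_zero, sub_nonneg] at hval
  have hmono : ∫ θ in (0:ℝ)..(Real.pi/2), (√(s^2 + 1^2*(Real.pi/2-θ)^2))⁻¹ ≤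
      ∫ θ in (0:ℝ)..(Real.pi/2), (1 - m * Real.sin θ ^ 2) ^ (-(1:ℝ)/2) := by
    apply intervalIntegral.integral_mono_on (by positivity)
      ((cont_inv_sqrt s 1 (Real.pi/2) hs).intervalIntegrable _ _)
      ((contK hm).intervalIntegrable _ _)
    intro θ hθ
    obtain ⟨h0, h1⟩ := hθ
    rw [rpow_neg_half (base_pos hm θ)]
    apply inv_sqrt_le (base_pos hm θ)
    have hc : Real.cos θ ≤ Real.pi/2 - θ := by
      rw [← Real.sin_pi_div_two_sub]
      exact Real.sin_le (by linarith)
    have hc0 : 0 ≤ Real.cos θ := Real.cos_nonneg_of_mem_Icc ⟨by linarith, h1⟩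
    rw [base_eq]
    have h2 : m * Real.cos θ ^ 2 ≤ (Real.pi/2 - θ)^2 := by nlinarith
    nlinarith
  calc Real.arsinh ((Real.pi/2) / s)
      = ∫ θ in (0:ℝ)..(Real.pi/2), (√(s^2 + 1^2*(Real.pi/2-θ)^2))⁻¹ := by
        rw [hval]; ring_nf
    _ ≤ _ := hmono

set_option maxHeartbeats 1000000 in
lemma K_upper {m δ η : ℝ} (hm0 : 0 < m) (hm1 : m < 1) (hδ0 : 0 < δ) (hδ1 : δ < 1)
    (hη0 : 0 < η) (hη1 : η ≤ 1) (hηδ : η^2 ≤ δ)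
    (hcond : 1 - m ≤ (1-δ)^2 * m * η^2) :
    ∫ θ in (0:ℝ)..(Real.pi/2), (1 - m * Real.sin θ ^ 2) ^ (-(1:ℝ)/2)
      ≤ (1/((1-δ)*√m)) * (Real.pi/(2*η) + Real.log 3 + (1/2) * (-Real.log (1-m))) := by
  have hpi : (3:ℝ) < Real.pi := Real.pi_gt_three
  have hsqm0 : (0:ℝ) < √m := Real.sqrt_pos.2 hm0
  have hsqm1 : √m ≤ 1 := by
    rw [show (1:ℝ) = √1 by simp]
    exact Real.sqrt_le_sqrt hm1.le
  have hsqm2 : (√m)^2 = m := Real.sq_sqrt hm0.le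
  set b := (1-δ)*√m with hbdef
  have hb : 0 < b := mul_pos (by linarith) hsqm0
  have hb2 : b^2 = (1-δ)^2 * m := by rw [hbdef, mul_pow, hsqm2]
  have hb1 : b ≤ 1 := by nlinarith
  have hs : (0:ℝ) < √(1-m) := Real.sqrt_pos.2 (by linarith)
  have hs2 : (√(1-m))^2 = 1 - m := Real.sq_sqrt (by linarith)
  set s := √(1-m) with hsdef
  have hsin : ∀ x : ℝ, 0 ≤ x → x ≤ η → (1-δ)*x ≤ Real.sin x := by
    intro x hx0 hxη
    rcases eq_or_lt_of_le hx0 with h | h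
    · simp [← h]
    · have h1 := Real.sin_gt_sub_cube h
      have hx2 : x^2 ≤ δ := by nlinarith
      nlinarith
  set θ₀ := Real.pi/2 - η with hθ₀def
  have hθ₀pos : 0 < θ₀ := by simp only [hθ₀def]; linarith
  have hθ₀lt : θ₀ < Real.pi/2 := by simp only [hθ₀def]; linarith
  -- pointwise upper bound on [θ₀, π/2]
  have hI₂ : ∫ θ in θ₀..(Real.pi/2), (1 - m * Real.sin θ ^ 2) ^ (-(1:ℝ)/2)
      ≤ (1/b) * Real.arsinh (b*η/s) := by
    have hval := integral_inv_sqrt s b (Real.pi/2) θ₀ (Real.pi/2) hs hb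
    have hmono : ∫ θ in θ₀..(Real.pi/2), (1 - m * Real.sin θ ^ 2) ^ (-(1:ℝ)/2)
        ≤ ∫ θ in θ₀..(Real.pi/2), (√(s^2 + b^2*(Real.pi/2-θ)^2))⁻¹ := by
      apply intervalIntegral.integral_mono_on hθ₀lt.le
        ((contK hm1).intervalIntegrable _ _)
        ((cont_inv_sqrt s b (Real.pi/2) hs).intervalIntegrable _ _)
      intro θ ⟨h0, h1⟩
      rw [rpow_neg_half (base_pos hm1 θ)]
      apply inv_sqrt_le
      · have h5 : 0 ≤ b^2*(Real.pi/2-θ)^2 := by positivity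
        nlinarith [pow_pos hs 2]
      · rw [base_eq]
        have hu0 : 0 ≤ Real.pi/2 - θ := by linarith
        have huη : Real.pi/2 - θ ≤ η := by simp only [hθ₀def] at h0; linarith
        have hcos : (1-δ)*(Real.pi/2-θ) ≤ Real.cos θ := by
          rw [← Real.sin_pi_div_two_sub]
          exact hsin _ hu0 huη
        have h3 : b^2*(Real.pi/2-θ)^2 ≤ m * Real.cos θ ^ 2 := by
          have h4 : ((1-δ)*(Real.pi/2-θ))^2 ≤ Real.cos θ ^ 2 := by
            apply sq_le_sq' _ hcos
            nlinarith
          calc b^2*(Real.pi/2-θ)^2 = m * ((1-δ)*(Real.pi/2-θ))^2 := by rw [hb2]; ring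
            _ ≤ m * Real.cos θ ^ 2 := mul_le_mul_of_nonneg_left h4 hm0.le
        linarith [hs2.symm ▸ le_refl (s^2)]
    rw [hval] at hmono
    simp only [sub_self, zero_div, mul_zero, Real.arsinh_zero, sub_zero] at hmono
    calc ∫ θ in θ₀..(Real.pi/2), (1 - m * Real.sin θ ^ 2) ^ (-(1:ℝ)/2) ≤ _ := hmono
      _ = (1/b) * Real.arsinh (b*η/s) := by
        congr 2
        simp only [hθ₀def]
        ring
  -- constant bound on [0, θ₀]
  have hI₁ : ∫ θ in (0:ℝ)..θ₀, (1 - m * Real.sin θ ^ 2) ^ (-(1:ℝ)/2)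
      ≤ (1/b) * (Real.pi/(2*η)) := by
    have hconst : ∫ θ in (0:ℝ)..θ₀, (1 - m * Real.sin θ ^ 2) ^ (-(1:ℝ)/2)
        ≤ ∫ _ in (0:ℝ)..θ₀, (b*η)⁻¹ := by
      apply intervalIntegral.integral_mono_on hθ₀pos.le
        ((contK hm1).intervalIntegrable _ _)
        (intervalIntegrable_const)
      intro θ ⟨h0, h1⟩
      rw [rpow_neg_half (base_pos hm1 θ)]
      have hcosθ₀ : (1-δ)*η ≤ Real.cos θ₀ := by
        simp only [hθ₀def]
        rw [Real.cos_pi_div_two_sub]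
        exact hsin η hη0.le le_rfl
      have hθ₀pi : θ₀ ≤ Real.pi := by simp only [hθ₀def]; linarith
      have hcos : (1-δ)*η ≤ Real.cos θ := by
        refine le_trans hcosθ₀ (Real.cos_le_cos_of_nonneg_of_le_pi h0 hθ₀pi h1)
      have hbase : (b*η)^2 ≤ 1 - m * Real.sin θ ^ 2 := by
        rw [base_eq]
        have h4 : ((1-δ)*η)^2 ≤ Real.cos θ ^ 2 := by
          apply sq_le_sq' _ hcos
          nlinarith
        have h5 : (b*η)^2 ≤ m * Real.cos θ ^ 2 := by
          calc (b*η)^2 = m * ((1-δ)*η)^2 := by rw [mul_pow, hb2]; ring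
            _ ≤ m * Real.cos θ ^ 2 := mul_le_mul_of_nonneg_left h4 hm0.le
        linarith
      calc (√(1 - m * Real.sin θ ^ 2))⁻¹ ≤ (√((b*η)^2))⁻¹ := by
            apply inv_sqrt_le (by positivity) hbase
        _ = (b*η)⁻¹ := by rw [Real.sqrt_sq (by positivity)]
    rw [intervalIntegral.integral_const, smul_eq_mul, sub_zero] at hconst
    calc ∫ θ in (0:ℝ)..θ₀, (1 - m * Real.sin θ ^ 2) ^ (-(1:ℝ)/2) ≤ θ₀ * (b*η)⁻¹ := hconst
      _ ≤ (Real.pi/2) * (b*η)⁻¹ := by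
          apply mul_le_mul_of_nonneg_right (by simp only [hθ₀def]; linarith) (by positivity)
      _ = (1/b) * (Real.pi/(2*η)) := by
          rw [mul_inv]
          field_simp
  -- arsinh bound
  have hx1 : 1 ≤ b*η/s := by
    rw [le_div_iff₀ hs]
    have : s ≤ b*η := by
      have h1 : s^2 ≤ (b*η)^2 := by rw [hs2, mul_pow, hb2]; ring_nf; ring_nf at hcond; linarith
      calc s = √(s^2) := (Real.sqrt_sq hs.le).symm
        _ ≤ √((b*η)^2) := Real.sqrt_le_sqrt h1
        _ = b*η := Real.sqrt_sq (by positivity)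
    linarith
  have harsinh : Real.arsinh (b*η/s) ≤ Real.log 3 + (1/2) * (-Real.log (1-m)) := by
    calc Real.arsinh (b*η/s) ≤ Real.log (3*(b*η/s)) := arsinh_le_log hx1
      _ = Real.log 3 + (Real.log (b*η) - Real.log s) := by
          rw [show (3:ℝ)*(b*η/s) = 3*((b*η)/s) by ring, Real.log_mul (by norm_num)
            (by positivity), Real.log_div (by positivity) hs.ne']
      _ ≤ Real.log 3 + (0 - Real.log s) := by
          have : Real.log (b*η) ≤ 0 := Real.log_nonpos (by positivity) (by nlinarith)
          linarith
      _ = Real.log 3 + (1/2) * (-Real.log (1-m)) := by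
          rw [hsdef, Real.log_sqrt (by linarith)]
          ring
  -- combine
  have hsplit := intervalIntegral.integral_add_adjacent_intervals
    ((contK hm1).intervalIntegrable (μ := MeasureTheory.volume) (0:ℝ) θ₀)
    ((contK hm1).intervalIntegrable (μ := MeasureTheory.volume) θ₀ (Real.pi/2))
  have h6 : (1/b) * Real.arsinh (b*η/s) ≤ (1/b) * (Real.log 3 + (1/2) * (-Real.log (1-m))) :=
    mul_le_mul_of_nonneg_left harsinh (by positivity)
  have h7 := le_trans hI₂ h6
  have h8 := add_le_add hI₁ h7
  have h9 : (1/b) * (Real.pi/(2*η)) + (1/b) * (Real.log 3 + (1/2) * (-Real.log (1-m)))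
      = (1/b) * (Real.pi/(2*η) + Real.log 3 + (1/2) * (-Real.log (1-m))) := by ring
  have h10 : (1/((1-δ)*√m)) * (Real.pi/(2*η) + Real.log 3 + (1/2) * (-Real.log (1-m)))
      = (1/b) * (Real.pi/(2*η) + Real.log 3 + (1/2) * (-Real.log (1-m))) := by rw [hbdef]
  rw [← hsplit, h10]
  linarith

/-- Remark 6.9: the complete elliptic integral of the first kind satisfies
`K(m) ∼ −(1/2) log(1 − m)` as `m → 1⁻`. -/
theorem stmt14 :
    Tendsto (fun m : ℝ =>
        (∫ θ in (0 : ℝ)..(Real.pi / 2),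
            (1 - m * Real.sin θ ^ 2) ^ (-(1 : ℝ) / 2)) /
          (-(1 / 2) * Real.log (1 - m)))
      (nhdsWithin 1 (Set.Iio 1)) (nhds 1) := by
  have hpi : (3:ℝ) < Real.pi := Real.pi_gt_three
  set K : ℝ → ℝ := fun m =>
    ∫ θ in (0 : ℝ)..(Real.pi / 2), (1 - m * Real.sin θ ^ 2) ^ (-(1 : ℝ) / 2) with hKdef
  set D : ℝ → ℝ := fun m => -(1 / 2) * Real.log (1 - m) with hDdef
  show Tendsto (fun m => K m / D m) (nhdsWithin 1 (Set.Iio 1)) (nhds 1)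
  -- basic filter facts
  have hev1 : ∀ᶠ m : ℝ in nhdsWithin 1 (Set.Iio 1), m ∈ Set.Iio 1 := eventually_mem_nhdsWithin
  have hev2 : ∀ᶠ m : ℝ in nhdsWithin 1 (Set.Iio 1), (1:ℝ)/2 < m :=
    eventually_nhdsWithin_of_eventually_nhds (eventually_gt_nhds (by norm_num))
  have h1m : Tendsto (fun m : ℝ => 1 - m) (nhdsWithin 1 (Set.Iio 1)) (nhdsWithin 0 (Set.Ioi 0)) := by
    apply tendsto_nhdsWithin_of_tendsto_nhds_of_eventually_within
    · have : Tendsto (fun m : ℝ => 1 - m) (nhds 1) (nhds (1 - 1)) :=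
        (continuous_const.sub continuous_id).tendsto 1
      simpa using this.mono_left nhdsWithin_le_nhds
    · filter_upwards [hev1] with m hm
      simp only [Set.mem_Iio] at hm
      exact Set.mem_Ioi.2 (by linarith)
  have hL : Tendsto (fun m : ℝ => -Real.log (1 - m)) (nhdsWithin 1 (Set.Iio 1)) atTop :=
    Filter.tendsto_neg_atTop_iff.mpr (Real.tendsto_log_nhdsGT_zero.comp h1m)
  have hD : Tendsto D (nhdsWithin 1 (Set.Iio 1)) atTop := by
    have h := Tendsto.const_mul_atTop (by norm_num : (0:ℝ) < 1/2) hL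
    exact h.congr (fun m => by rw [hDdef]; ring)
  have hDpos : ∀ᶠ m : ℝ in nhdsWithin 1 (Set.Iio 1), 0 < D m := hD.eventually_gt_atTop 0
  -- lower bound: eventually 1 ≤ K m / D m
  have hlow : ∀ᶠ m : ℝ in nhdsWithin 1 (Set.Iio 1), 1 ≤ K m / D m := by
    filter_upwards [hev1, hDpos] with m hm hDm
    simp only [Set.mem_Iio] at hm
    rw [one_le_div hDm]
    have hs : (0:ℝ) < √(1-m) := Real.sqrt_pos.2 (by linarith)
    have h1 := K_lower hm
    have h2 := log_le_arsinh (x := (Real.pi/2) / √(1-m)) (by positivity)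
    have h3 : Real.log ((Real.pi/2) / √(1-m))
        = Real.log (Real.pi/2) - Real.log (1-m) / 2 := by
      rw [Real.log_div (by positivity) hs.ne', Real.log_sqrt (by linarith)]
    have h4 : (0:ℝ) ≤ Real.log (Real.pi/2) :=
      Real.log_nonneg (by linarith)
    have h5 : D m = -Real.log (1-m) / 2 := by rw [hDdef]; ring
    rw [h5]
    calc -Real.log (1-m) / 2 ≤ Real.log ((Real.pi/2) / √(1-m)) := by rw [h3]; linarith
      _ ≤ Real.arsinh ((Real.pi/2) / √(1-m)) := h2
      _ ≤ K m := h1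
  rw [tendsto_order]
  constructor
  · intro a ha
    filter_upwards [hlow] with m hm
    linarith
  · intro a ha
    set δ : ℝ := (a - 1) / (2 * a) with hδdef
    have ha0 : 0 < a := by linarith
    have hδ0 : 0 < δ := div_pos (by linarith) (by linarith)
    have hδ1 : δ < 1/2 := by rw [hδdef, div_lt_iff₀ (by positivity)]; linarith
    have hinvlt : 1 / (1 - δ) < a := by
      have h1δ : 1 - δ = (a+1)/(2*a) := by
        rw [hδdef]
        field_simp
        ring
      rw [h1δ, one_div_div, div_lt_iff₀ (by linarith : (0:ℝ) < a + 1)]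
      nlinarith [mul_pos ha0 (by linarith : (0:ℝ) < a - 1)]
    set η : ℝ := min (√δ) 1 with hηdef
    have hη0 : 0 < η := lt_min (Real.sqrt_pos.2 hδ0) one_pos
    have hη1 : η ≤ 1 := min_le_right _ _
    have hηδ : η^2 ≤ δ := by
      have h1 : η ≤ √δ := min_le_left _ _
      calc η^2 ≤ (√δ)^2 := by nlinarith [hη0.le]
        _ = δ := Real.sq_sqrt hδ0.le
    -- the auxiliary dominating function
    set C : ℝ := Real.pi/(2*η) + Real.log 3 with hCdef
    set g : ℝ → ℝ := fun m => (1/((1-δ)*√m)) * (C / D m + 1) with hgdef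
    have hg : Tendsto g (nhdsWithin 1 (Set.Iio 1)) (nhds (1/(1-δ))) := by
      have hsq : Tendsto (fun m : ℝ => √m) (nhdsWithin 1 (Set.Iio 1)) (nhds 1) := by
        have : Tendsto (fun m : ℝ => √m) (nhds 1) (nhds (√1)) :=
          Real.continuous_sqrt.tendsto 1
        rw [Real.sqrt_one] at this
        exact this.mono_left nhdsWithin_le_nhds
      have hfrac : Tendsto (fun m : ℝ => C / D m) (nhdsWithin 1 (Set.Iio 1)) (nhds 0) :=
        Tendsto.div_atTop tendsto_const_nhds hD
      have hmul : Tendsto g (nhdsWithin 1 (Set.Iio 1))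
          (nhds ((1/((1-δ)*1)) * (0 + 1))) := by
        exact Tendsto.mul
          (Tendsto.div tendsto_const_nhds (tendsto_const_nhds.mul hsq)
            (by simp; intro h; linarith))
          (hfrac.add tendsto_const_nhds)
      have : (1/((1-δ)*1)) * ((0:ℝ) + 1) = 1/(1-δ) := by norm_num
      rwa [this] at hmul
    have hga : ∀ᶠ m : ℝ in nhdsWithin 1 (Set.Iio 1), g m < a :=
      hg.eventually_lt_const hinvlt
    -- eventually the smallness condition holds
    have h1δ0 : (0:ℝ) < 1 - δ := by linarith
    have hr : (0:ℝ) < (1-δ)^2 * ((1:ℝ)/2) * η^2 :=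
      mul_pos (mul_pos (pow_pos h1δ0 2) (by norm_num)) (pow_pos hη0 2)
    have hcond_ev : ∀ᶠ m : ℝ in nhdsWithin 1 (Set.Iio 1),
        1 - m < (1-δ)^2 * ((1:ℝ)/2) * η^2 :=
      (h1m.mono_right nhdsWithin_le_nhds).eventually (eventually_lt_nhds hr)
    filter_upwards [hev1, hev2, hDpos, hga, hcond_ev] with m hm1 hm2 hDm hgam hcondm
    simp only [Set.mem_Iio] at hm1
    have hm0 : (0:ℝ) < m := by linarith
    have hcond : 1 - m ≤ (1-δ)^2 * m * η^2 := by nlinarith [sq_nonneg (1-δ), sq_nonneg η]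
    have hup := K_upper hm0 hm1 hδ0 (by linarith) hη0 hη1 hηδ hcond
    have hKm : K m ≤ (1/((1-δ)*√m)) * (C + D m) := by
      have : Real.pi/(2*η) + Real.log 3 + (1/2) * (-Real.log (1-m)) = C + D m := by
        rw [hCdef, hDdef]; ring
      rw [hKdef]
      calc (∫ θ in (0:ℝ)..(Real.pi/2), (1 - m * Real.sin θ ^ 2) ^ (-(1:ℝ)/2))
          ≤ (1/((1-δ)*√m)) * (Real.pi/(2*η) + Real.log 3 + (1/2) * (-Real.log (1-m))) := hup
        _ = (1/((1-δ)*√m)) * (C + D m) := by rw [this]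
    have hdiv : K m / D m ≤ (1/((1-δ)*√m)) * (C + D m) / D m :=
      (div_le_div_iff_of_pos_right hDm).2 hKm
    have heq : (1/((1-δ)*√m)) * (C + D m) / D m = g m := by
      rw [hgdef]
      field_simp
    calc K m / D m ≤ (1/((1-δ)*√m)) * (C + D m) / D m := hdiv
      _ = g m := heq
      _ < a := hgam
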